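/- If G is a γ_t-critical graph and v is a vertex of G that is not a support vertex, then every total dominating set of G − v of minimum cardinality γ_t(G − v) contains no neighbor of v. -/
import Mathlib


open scoped Classical

namespace SimpleGraph

variable {V : Type*}

/-- A set `S` is a total dominating set if every vertex is adjacent to a vertex of `S`. -/
def IsTotalDomSet (G : SimpleGraph V) (S : Set V) : Prop :=
  ∀ v : V, ∃ u ∈ S, G.Adj v u

/-- The total domination number: minimum cardinality of a total dominating set. -/
noncomputable def totalDomNum (G : SimpleGraph V) [Fintype V] : ℕ :=
  sInf {n : ℕ | ∃ S : Finset V, G.IsTotalDomSet ↑S ∧ S.card = n}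

/-- The graph obtained by deleting the vertex `v`. -/
def deleteVert (G : SimpleGraph V) (v : V) : SimpleGraph {u : V // u ≠ v} :=
  G.induce {u : V | u ≠ v}

/-- A support vertex is a vertex adjacent to a leaf (a vertex of degree one). -/
noncomputable def IsSupportVertex (G : SimpleGraph V) [Fintype V] (v : V) : Prop :=
  ∃ u : V, G.Adj v u ∧ G.degree u = 1

/-- `G` is total domination vertex critical: it has no isolated vertex and deleting any
vertex that is not a support vertex decreases the total domination number. -/
noncomputable def IsTotalDomCritical (G : SimpleGraph V) [Fintype V] : Prop :=
  (∀ v : V, 0 < G.degree v) ∧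
  ∀ v : V, ¬ G.IsSupportVertex v →
    (G.deleteVert v).totalDomNum < G.totalDomNum

/-- in a `γₜ`-critical graph, any minimum total dominating set of `G - v`
(for `v` not a support vertex) contains no neighbor of `v`. -/
theorem stmt4 {V : Type*} [Fintype V] (G : SimpleGraph V)
    (hcrit : G.IsTotalDomCritical) (v : V) (hv : ¬ G.IsSupportVertex v)
    (S : Finset {u : V // u ≠ v})
    (hS : (G.deleteVert v).IsTotalDomSet ↑S)
    (hcard : S.card = (G.deleteVert v).totalDomNum) :
    ∀ u ∈ S, ¬ G.Adj v u.1 := by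
  intro u hu hadj
  have hlt := hcrit.2 v hv
  set T : Finset V := S.image Subtype.val with hT
  have hTdom : G.IsTotalDomSet ↑T := by
    intro w
    by_cases hw : w = v
    · exact ⟨u.1, by simp [hT, Finset.mem_image]; exact ⟨u.2, hu⟩, hw ▸ hadj⟩
    · obtain ⟨x, hx, hxadj⟩ := hS ⟨w, hw⟩
      refine ⟨x.1, by simp [hT, Finset.mem_image]; exact ⟨x.2, hx⟩, ?_⟩
      simpa [deleteVert, comap_adj] using hxadj
  have hle : G.totalDomNum ≤ T.card :=
    Nat.sInf_le ⟨T, hTdom, rfl⟩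
  have hTcard : T.card = S.card :=
    Finset.card_image_of_injective _ Subtype.val_injective
  omega

end SimpleGraph
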